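/- If L' is a shuffle ideal (i.e., L' = L' ⧢ A*) and L is any language, then L ↑_C L' is a shuffle ideal for any subalphabet C. -/

import Mathlib

open List

variable {A : Type*}

/-- Extract the subword of `x` at positions `K`. -/
def extractW (x : List A) (K : Finset (Fin x.length)) : List A :=
  ((List.finRange x.length).filter (fun i => i ∈ K)).map x.get

/-- `InterpW C u v x` : `x` is a shuffle of `u` and `v` with possible sharing of letters in `C`. -/
def InterpW (C : Set A) (u v x : List A) : Prop :=
  ∃ K K' : Finset (Fin x.length), K ∪ K' = Finset.univ ∧
    extractW x K = u ∧ extractW x K' = v ∧ ∀ a ∈ extractW x (K ∩ K'), a ∈ C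

/-- Interpolation product of languages. -/
def interpL (C : Set A) (L L' : Set (List A)) : Set (List A) :=
  {x | ∃ u ∈ L, ∃ v ∈ L', InterpW C u v x}

/-- Shuffle product of languages. -/
def shuffleL (L L' : Set (List A)) : Set (List A) := interpL ∅ L L'

/-- Simon's congruence: same scattered subwords of length at most `k`. -/
def SimK (k : ℕ) (u v : List A) : Prop :=
  ∀ w : List A, w.length ≤ k → (w.Sublist u ↔ w.Sublist v)

/-- Piecewise-testability: union of `∼ₖ`-classes for some `k`. -/
def PT (L : Set (List A)) : Prop :=
  ∃ k, ∀ u v : List A, SimK k u v → (u ∈ L ↔ v ∈ L)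

/-- A DFA is acyclic when every cycle is a self-loop. -/
def DFA.Acyclic {σ : Type*} (M : DFA A σ) : Prop :=
  ∀ p q (u v : List A), M.evalFrom p u = q → M.evalFrom q v = p → p = q

/-- A language is ℛ-trivial iff it is recognized by a finite acyclic DFA. -/
def RTrivial (L : Set (List A)) : Prop :=
  ∃ (σ : Type) (_ : Fintype σ) (M : DFA A σ), M.Acyclic ∧ ∀ x, x ∈ M.accepts ↔ x ∈ L


lemma extract_univ (x : List A) : extractW x Finset.univ = x := by
  simp [extractW, List.map_get_finRange]

lemma extract_empty (x : List A) : extractW x (∅ : Finset (Fin x.length)) = [] := by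
  simp [extractW]

lemma extract_mono (x : List A) {K K' : Finset (Fin x.length)} (h : K ⊆ K') :
    (extractW x K).Sublist (extractW x K') := by
  apply List.Sublist.map
  exact List.monotone_filter_right _ (by simpa using fun a ha => h ha)

lemma extract_sublist (x : List A) (K : Finset (Fin x.length)) :
    (extractW x K).Sublist x := by
  conv_rhs => rw [← extract_univ x]
  exact extract_mono x (Finset.subset_univ K)

lemma extract_map {x y : List A} (f : Fin x.length ↪o Fin y.length)
    (hf : ∀ i, x.get i = y.get (f i)) (K : Finset (Fin x.length)) :
    extractW y (K.map f.toEmbedding) = extractW x K := by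
  have key : (List.finRange y.length).filter (fun i => i ∈ K.map f.toEmbedding)
      = ((List.finRange x.length).filter (fun i => i ∈ K)).map f := by
    apply fun hp h1 h2 => List.Perm.eq_of_pairwise' (r := (· ≤ · : Fin y.length → Fin y.length → Prop)) h1 h2 hp
    · apply List.perm_of_nodup_nodup_toFinset_eq
      · exact (List.nodup_finRange _).filter _
      · exact ((List.nodup_finRange _).filter _).map f.injective
      · ext j
        simp [List.mem_filter, Finset.mem_map]
    · exact ((List.pairwise_lt_finRange _).filter _).imp (fun h => le_of_lt h)
    · apply List.Pairwise.map (R := (· < ·)) _ (fun a b h => le_of_lt (f.strictMono h))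
      exact (List.pairwise_lt_finRange _).filter _
  simp only [extractW, key, List.map_map]
  congr 1
  ext i
  exact (hf i).symm

lemma union_map_compl_interW {C : Set A} {u v x y : List A} (h : InterpW C u v x)
    (hxy : x.Sublist y) : ∃ v', v.Sublist v' ∧ InterpW C u v' y := by
  obtain ⟨f, hf⟩ := List.sublist_iff_exists_fin_orderEmbedding_get_eq.mp hxy
  obtain ⟨K, K', hun, hu, hv, hC⟩ := h
  set e := f.toEmbedding with he
  have hsub : K.map e ⊆ Finset.univ.map e := Finset.map_subset_map.mpr (Finset.subset_univ K)
  refine ⟨extractW y (K'.map e ∪ (Finset.univ.map e)ᶜ), ?_,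
    K.map e, K'.map e ∪ (Finset.univ.map e)ᶜ, ?_, ?_, rfl, ?_⟩
  · rw [← hv, ← extract_map f hf K']
    exact extract_mono y Finset.subset_union_left
  · have h1 : K.map e ∪ K'.map e = Finset.univ.map e := by rw [← Finset.map_union, hun]
    rw [← Finset.union_assoc, h1, Finset.union_compl]
  · rw [extract_map f hf]; exact hu
  · have h0 : K.map e ∩ (Finset.univ.map e)ᶜ = ∅ :=
      Finset.disjoint_iff_inter_eq_empty.mp (disjoint_compl_right.mono_left hsub)
    have h2 : K.map e ∩ (K'.map e ∪ (Finset.univ.map e)ᶜ) = (K ∩ K').map e := by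
      rw [Finset.inter_union_distrib_left, h0, Finset.union_empty, ← Finset.map_inter]
    rw [h2, extract_map f hf]; exact hC

lemma upwardW {X : Set (List A)} {x y : List A} (hx : x ∈ X) (h : x.Sublist y) :
    y ∈ shuffleL X Set.univ := by
  obtain ⟨f, hf⟩ := List.sublist_iff_exists_fin_orderEmbedding_get_eq.mp h
  refine ⟨x, hx, extractW y ((Finset.univ.map f.toEmbedding)ᶜ), trivial,
    Finset.univ.map f.toEmbedding, (Finset.univ.map f.toEmbedding)ᶜ, by simp, ?_, rfl, ?_⟩
  · rw [extract_map f hf]; exact extract_univ x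
  · intro a ha
    rw [Finset.inter_compl, extract_empty] at ha
    simp at ha

theorem stmt5 {A : Type*} (L L' : Set (List A))
    (hL' : L' = shuffleL L' Set.univ) (C : Set A) :
    interpL C L L' = shuffleL (interpL C L L') Set.univ := by
  ext y
  constructor
  · intro hy
    exact upwardW hy (List.Sublist.refl y)
  · rintro ⟨x, hx, t, -, K, K', -, hxK, -, -⟩
    have hxy : x.Sublist y := hxK ▸ extract_sublist y K
    obtain ⟨u, hu, v, hv, hI⟩ := hx
    obtain ⟨v', hvv', hI'⟩ := union_map_compl_interW hI hxy
    exact ⟨u, hu, v', hL' ▸ upwardW hv hvv', hI'⟩
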